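/- Conditional independence transfer: if X ⫫ R | (Z, W) and W ⫫ R, and additionally X ⫫ Y | (Z, W, R = 0) under the conditional measure, with X ⫫ Y | (Z, W) ⟺ X ⫫ Y | (Z, W, R) guaranteed by (X, Y) ⫫ R | (Z, W), then X ⫫ Y | (Z, W) holds in the full (unconditioned) measure. Formally: if (X, Y) ⫫ R | (Z, W) and X ⫫ Y | (Z, W) in the measure P(· | R = 0) (with P(R=0) > 0 and P(R=0 | Z, W) > 0 a.s.), then X ⫫ Y | (Z, W) under P. -/

import Mathlib

open MeasureTheory ProbabilityTheory

section Aux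

variable {Ω : Type*} {m mΩ : MeasurableSpace Ω}

/-- indicator as product helper -/
private lemma indicator_inter_eq_mul (A s : Set Ω) :
    (A ∩ s).indicator (fun _ => (1 : ℝ)) =
      A.indicator (fun _ => (1 : ℝ)) * s.indicator (fun _ => (1 : ℝ)) := by
  funext x
  by_cases hA : x ∈ A <;> by_cases hs : x ∈ s <;>
    simp [Set.indicator_apply, Set.mem_inter_iff, hA, hs]

/-- Key lemma: if the conditional expectation of `A ∩ s` factorizes, then the conditional
expectation of `A` given `m` is the same under `μ` and under `μ[|s]`. -/
private lemma condexp_cond_eq_condexp (hm : m ≤ mΩ) (μ : Measure Ω) [IsProbabilityMeasure μ]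
    {s A : Set Ω} (hs : MeasurableSet s) (hμs : μ s ≠ 0) (hA : MeasurableSet A)
    (hfac : (μ⟦A ∩ s | m⟧) =ᵐ[μ] fun ω => (μ⟦A | m⟧) ω * (μ⟦s | m⟧) ω) :
    (μ[|s])[A.indicator (fun _ => (1 : ℝ)) | m] =ᵐ[μ[|s]] μ⟦A | m⟧ := by
  haveI : IsProbabilityMeasure (μ[|s]) := cond_isProbabilityMeasure hμs
  have hind : Integrable (A.indicator (fun _ => (1 : ℝ))) (μ[|s]) :=
    (integrable_const (1 : ℝ)).indicator hA
  have hintμ' : Integrable (μ⟦A | m⟧) (μ[|s]) := by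
    rw [ProbabilityTheory.cond]
    exact (integrable_condExp.restrict).smul_measure (by simp [hμs])
  -- integrability of (μ⟦A|m⟧) * 1_s under μ
  have hprod : Integrable ((μ⟦A | m⟧) * s.indicator (fun _ => (1 : ℝ))) μ := by
    refine Integrable.mono (integrable_condExp (m := m) (μ := μ) (f := A.indicator fun _ => (1 : ℝ))) ?_ ?_
    · exact ((stronglyMeasurable_condExp.mono hm).aestronglyMeasurable.mul
        ((stronglyMeasurable_const.indicator hs).aestronglyMeasurable))
    refine Filter.Eventually.of_forall fun x => ?_
    simp only [Pi.mul_apply, norm_mul, Real.norm_eq_abs]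
    by_cases hx : x ∈ s <;> simp [Set.indicator_apply, hx, abs_nonneg]
  refine (ae_eq_condExp_of_forall_setIntegral_eq hm hind
    (fun E hE _ => hintμ'.integrableOn) (fun E hE _ => ?_)
    (stronglyMeasurable_condExp.aestronglyMeasurable)).symm
  -- set integral equality over E ∈ m
  have hEΩ : MeasurableSet E := hm E hE
  -- LHS
  have hres : (μ[|s]).restrict E = (μ s)⁻¹ • μ.restrict (E ∩ s) := by
    rw [ProbabilityTheory.cond, Measure.restrict_smul, Measure.restrict_restrict hEΩ]
  have key : ∫ x in E ∩ s, (μ⟦A | m⟧) x ∂μ = (μ ((A ∩ s) ∩ E)).toReal := by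
    rw [← setIntegral_indicator hs]
    have h1 : ∫ x in E, s.indicator (μ⟦A | m⟧) x ∂μ
        = ∫ x in E, ((μ⟦A | m⟧) * s.indicator (fun _ => (1 : ℝ))) x ∂μ := by
      refine setIntegral_congr_fun hEΩ fun x _ => ?_
      by_cases hx : x ∈ s <;> simp [Set.indicator_apply, hx]
    have h2 : μ[(μ⟦A | m⟧) * s.indicator (fun _ => (1 : ℝ)) | m]
        =ᵐ[μ] (μ⟦A | m⟧) * (μ⟦s | m⟧) :=
      condExp_mul_of_stronglyMeasurable_left stronglyMeasurable_condExp hprod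
        ((integrable_const (1 : ℝ)).indicator hs)
    have h3 : ∫ x in E, ((μ⟦A | m⟧) * s.indicator (fun _ => (1 : ℝ))) x ∂μ
        = ∫ x in E, ((μ⟦A | m⟧) * (μ⟦s | m⟧)) x ∂μ := by
      rw [← setIntegral_condExp hm hprod hE]
      exact setIntegral_congr_ae hEΩ (h2.mono fun x hx _ => hx)
    have h4 : ∫ x in E, ((μ⟦A | m⟧) * (μ⟦s | m⟧)) x ∂μ
        = ∫ x in E, (μ⟦A ∩ s | m⟧) x ∂μ :=
      setIntegral_congr_ae hEΩ (hfac.mono fun x hx _ => hx.symm)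
    have h5 : ∫ x in E, (μ⟦A ∩ s | m⟧) x ∂μ
        = ∫ x in E, (A ∩ s).indicator (fun _ => (1 : ℝ)) x ∂μ :=
      setIntegral_condExp hm ((integrable_const (1 : ℝ)).indicator (hA.inter hs)) hE
    have h6 : ∫ x in E, (A ∩ s).indicator (fun _ => (1 : ℝ)) x ∂μ
        = (μ ((A ∩ s) ∩ E)).toReal := by
      rw [setIntegral_indicator (hA.inter hs), setIntegral_const, smul_eq_mul, mul_one,
        Set.inter_comm E (A ∩ s), measureReal_def]
    rw [h1, h3, h4, h5, h6]
  calc ∫ x in E, (μ⟦A | m⟧) x ∂μ[|s]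
      = (μ s)⁻¹.toReal * ∫ x in E ∩ s, (μ⟦A | m⟧) x ∂μ := by
        rw [hres, integral_smul_measure, smul_eq_mul]
    _ = (μ s)⁻¹.toReal * (μ ((A ∩ s) ∩ E)).toReal := by rw [key]
    _ = ((μ s)⁻¹ * μ (s ∩ (A ∩ E))).toReal := by
        have hset : (A ∩ s) ∩ E = s ∩ (A ∩ E) := by
          ext x; simp only [Set.mem_inter_iff]; tauto
        rw [ENNReal.toReal_mul, hset]
    _ = ∫ x in E, A.indicator (fun _ => (1 : ℝ)) x ∂μ[|s] := by
        rw [setIntegral_indicator hA, setIntegral_const, smul_eq_mul, mul_one,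
          Set.inter_comm E A, measureReal_def, cond_apply hs]

/-- Lift an a.e. equality of `m`-measurable functions from `μ[|s]` to `μ`, when
`μ⟦s|m⟧ > 0` a.e. -/
private lemma ae_eq_of_cond_ae_eq (hm : m ≤ mΩ) (μ : Measure Ω) [IsProbabilityMeasure μ]
    {s : Set Ω} (hs : MeasurableSet s) (hμs : μ s ≠ 0)
    (hpos : ∀ᵐ ω ∂μ, 0 < (μ⟦s | m⟧) ω)
    {f g : Ω → ℝ} (hf : StronglyMeasurable[m] f) (hg : StronglyMeasurable[m] g)
    (h : f =ᵐ[μ[|s]] g) : f =ᵐ[μ] g := by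
  have hDm : MeasurableSet[m] {x | f x ≠ g x} :=
    (measurableSet_eq_fun hf.measurable hg.measurable).compl
  have hD : MeasurableSet {x | f x ≠ g x} := hm _ hDm
  have hμ'D : μ[|s] {x | f x ≠ g x} = 0 := h
  rw [cond_apply hs] at hμ'D
  have hsD : μ (s ∩ {x | f x ≠ g x}) = 0 := by
    rcases mul_eq_zero.mp hμ'D with h0 | h0
    · exact absurd h0 (by simp [hμs, measure_ne_top μ s])
    · exact h0
  -- ∫_D μ⟦s|m⟧ = μ (s ∩ D) = 0
  have hint : ∫ x in {x | f x ≠ g x}, (μ⟦s | m⟧) x ∂μ = 0 := by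
    rw [setIntegral_condExp hm ((integrable_const (1 : ℝ)).indicator hs) hDm,
      setIntegral_indicator hs, setIntegral_const, smul_eq_mul, mul_one,
      Set.inter_comm, measureReal_def, hsD, ENNReal.toReal_zero]
  have hnn : 0 ≤ᵐ[μ] (μ⟦s | m⟧) :=
    condExp_nonneg (Filter.Eventually.of_forall fun x => Set.indicator_nonneg (fun _ _ => zero_le_one) x)
  have hzero : (μ⟦s | m⟧) =ᵐ[μ.restrict {x | f x ≠ g x}] 0 :=
    (integral_eq_zero_iff_of_nonneg_ae (ae_restrict_of_ae hnn)
      integrable_condExp.integrableOn).mp hint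
  have hposD : ∀ᵐ x ∂μ.restrict {x | f x ≠ g x}, 0 < (μ⟦s | m⟧) x := ae_restrict_of_ae hpos
  have hfalse : ∀ᵐ x ∂μ.restrict {x | f x ≠ g x}, False := by
    filter_upwards [hzero, hposD] with x h1 h2
    rw [h1] at h2; exact lt_irrefl 0 h2
  have : μ.restrict {x | f x ≠ g x} Set.univ = 0 := by
    simpa [ae_iff] using hfalse
  rw [Measure.restrict_apply_univ] at this
  exact this

end Aux

/-- conditional independence transfer: if `(X, Y) ⫫ R | (Z, W)`,
`P(R = 0) > 0`, `P(R = 0 | Z, W) > 0` a.s., and `X ⫫ Y | (Z, W)` holds under the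
conditional (test-wise deleted) measure `P(· | R = 0)`, then `X ⫫ Y | (Z, W)`
holds under the full measure `P`. -/
theorem condIndep_transfer_from_deleted_data
    {Ω : Type*} [MeasurableSpace Ω] [StandardBorelSpace Ω] [Nonempty Ω]
    (μ : Measure Ω) [IsProbabilityMeasure μ]
    {βX βY βZ βW : Type*} [MeasurableSpace βX] [MeasurableSpace βY]
    [MeasurableSpace βZ] [MeasurableSpace βW]
    (X : Ω → βX) (Y : Ω → βY) (Z : Ω → βZ) (W : Ω → βW) (R : Ω → Bool)
    (hX : Measurable X) (hY : Measurable Y) (hZ : Measurable Z) (hW : Measurable W)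
    (hR : Measurable R)
    (hCI : CondIndepFun (MeasurableSpace.comap (fun ω => (Z ω, W ω)) inferInstance)
      ((hZ.prodMk hW).comap_le) (fun ω => (X ω, Y ω)) R μ)
    (hpos : 0 < μ (R ⁻¹' {false}))
    (hposZW : ∀ᵐ ω ∂μ, 0 < condExpKernel μ
      (MeasurableSpace.comap (fun ω => (Z ω, W ω)) inferInstance) ω (R ⁻¹' {false}))
    (hdel : CondIndepFun (MeasurableSpace.comap (fun ω => (Z ω, W ω)) inferInstance)
      ((hZ.prodMk hW).comap_le) X Y (μ[|R ⁻¹' {false}])) :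
    CondIndepFun (MeasurableSpace.comap (fun ω => (Z ω, W ω)) inferInstance)
      ((hZ.prodMk hW).comap_le) X Y μ := by
  have hm : MeasurableSpace.comap (fun ω => (Z ω, W ω)) inferInstance
      ≤ ‹MeasurableSpace Ω› := (hZ.prodMk hW).comap_le
  have hs : MeasurableSet (R ⁻¹' {false}) := hR (measurableSet_singleton false)
  have hμs : μ (R ⁻¹' {false}) ≠ 0 := hpos.ne'
  haveI : IsProbabilityMeasure (μ[|R ⁻¹' {false}]) := cond_isProbabilityMeasure hμs
  -- positivity of μ⟦s|m⟧
  have hpos' : ∀ᵐ ω ∂μ, 0 <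
      (μ⟦R ⁻¹' {false} | MeasurableSpace.comap (fun ω => (Z ω, W ω)) inferInstance⟧) ω := by
    filter_upwards [condExpKernel_ae_eq_condExp hm hs, hposZW] with ω h1 h2
    rw [← h1]
    exact ENNReal.toReal_pos h2.ne' (measure_ne_top _ _)
  -- factorization from hCI
  rw [condIndepFun_iff_condExp_inter_preimage_eq_mul (hX.prodMk hY) hR] at hCI
  rw [condIndepFun_iff_condExp_inter_preimage_eq_mul hX hY] at hdel ⊢
  intro s1 s2 hs1 hs2
  have ht1 : (fun ω => (X ω, Y ω)) ⁻¹' (s1 ×ˢ Set.univ) = X ⁻¹' s1 := by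
    ext x; simp
  have ht2 : (fun ω => (X ω, Y ω)) ⁻¹' (Set.univ ×ˢ s2) = Y ⁻¹' s2 := by
    ext x; simp
  have ht12 : (fun ω => (X ω, Y ω)) ⁻¹' (s1 ×ˢ s2) = X ⁻¹' s1 ∩ Y ⁻¹' s2 := by
    ext x; simp [Set.mem_inter_iff]
  have hfac1 := hCI (s1 ×ˢ Set.univ) {false} (hs1.prod MeasurableSet.univ)
    (measurableSet_singleton false)
  have hfac2 := hCI (Set.univ ×ˢ s2) {false} (MeasurableSet.univ.prod hs2)
    (measurableSet_singleton false)
  have hfac12 := hCI (s1 ×ˢ s2) {false} (hs1.prod hs2) (measurableSet_singleton false)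
  rw [ht1] at hfac1
  rw [ht2] at hfac2
  rw [ht12] at hfac12
  -- transfer each condexp from μ to μ[|s]
  have hB1 := condexp_cond_eq_condexp hm μ hs hμs (hX hs1) hfac1
  have hB2 := condexp_cond_eq_condexp hm μ hs hμs (hY hs2) hfac2
  have hB12 := condexp_cond_eq_condexp hm μ hs hμs ((hX hs1).inter (hY hs2)) hfac12
  have hdel' := hdel s1 s2 hs1 hs2
  have hcomb : (μ⟦X ⁻¹' s1 ∩ Y ⁻¹' s2 |
        MeasurableSpace.comap (fun ω => (Z ω, W ω)) inferInstance⟧) =ᵐ[μ[|R ⁻¹' {false}]]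
      fun ω => (μ⟦X ⁻¹' s1 | MeasurableSpace.comap (fun ω => (Z ω, W ω)) inferInstance⟧) ω *
        (μ⟦Y ⁻¹' s2 | MeasurableSpace.comap (fun ω => (Z ω, W ω)) inferInstance⟧) ω := by
    filter_upwards [hB1, hB2, hB12, hdel'] with ω h1 h2 h12 hd
    rw [← h12, hd, h1, h2]
  exact ae_eq_of_cond_ae_eq hm μ hs hμs hpos' stronglyMeasurable_condExp
    (stronglyMeasurable_condExp.mul stronglyMeasurable_condExp) hcomb
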